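/- Let G be a perfect group, let A be a finite set with |A| ≥ 3, and let H be a group acting transitively on A. Consider the following bijections of the set A × G × 𝒫(A): for g ∈ G and a ∈ A, define p_{g,a}(a', g', X) = (a', g·g', X) if a' = a and a ∈ X, and p_{g,a}(a', g', X) = (a', g', X) otherwise; for π ∈ H, define q_π(a', g', X) = (π • a', g', X). Then for every g ∈ G and every a ∈ A, the subgroup of the symmetric group of A × G × 𝒫(A) generated by all the p_{g',a'} (g' ∈ G, a' ∈ A) and all the q_π (π ∈ H) contains the bijection r_{g,a} defined by r_{g,a}(a', g', X) = (a', g·g', X) if X ≠ ∅ and a' = a, and r_{g,a}(a', g', X) = (a', g', X) otherwise. -/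

import Mathlib

open Classical in
/-- The bijection `p_{g,a}` of `A × G × 𝒫(A)`: left-multiply the `G`-component by `g`
exactly when the `A`-component equals `a` and `a` belongs to the `𝒫(A)`-component. -/
noncomputable def pMap {G A : Type*} [Group G] (g : G) (a : A) :
    Equiv.Perm (A × G × Set A) where
  toFun x := if x.1 = a ∧ a ∈ x.2.2 then (x.1, g * x.2.1, x.2.2) else x
  invFun x := if x.1 = a ∧ a ∈ x.2.2 then (x.1, g⁻¹ * x.2.1, x.2.2) else x
  left_inv := by
    intro x
    by_cases h : x.1 = a ∧ a ∈ x.2.2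
    · obtain ⟨h1, h2⟩ := h
      subst h1
      simp [h2]
    · simp [h]
  right_inv := by
    intro x
    by_cases h : x.1 = a ∧ a ∈ x.2.2
    · obtain ⟨h1, h2⟩ := h
      subst h1
      simp [h2]
    · simp [h]

/-- The bijection `q_π` of `A × G × 𝒫(A)`: act by `π ∈ H` on the `A`-component. -/
def qMap {G A H : Type*} [Group G] [Group H] [MulAction H A] (π : H) :
    Equiv.Perm (A × G × Set A) where
  toFun x := (π • x.1, x.2)
  invFun x := (π⁻¹ • x.1, x.2)
  left_inv := by intro x; simp
  right_inv := by intro x; simp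

open Classical in
/-- The bijection `r_{g,a}` of `A × G × 𝒫(A)`: left-multiply the `G`-component by `g`
exactly when the `𝒫(A)`-component is nonempty and the `A`-component equals `a`. -/
noncomputable def rMap {G A : Type*} [Group G] (g : G) (a : A) :
    Equiv.Perm (A × G × Set A) where
  toFun x := if x.2.2 ≠ ∅ ∧ x.1 = a then (x.1, g * x.2.1, x.2.2) else x
  invFun x := if x.2.2 ≠ ∅ ∧ x.1 = a then (x.1, g⁻¹ * x.2.1, x.2.2) else x
  left_inv := by
    intro x
    by_cases h : x.2.2 ≠ ∅ ∧ x.1 = a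
    · obtain ⟨h1, h2⟩ := h
      subst h2
      simp [h1]
    · simp [h]
  right_inv := by
    intro x
    by_cases h : x.2.2 ≠ ∅ ∧ x.1 = a
    · obtain ⟨h1, h2⟩ := h
      subst h2
      simp [h1]
    · simp [h]


section Aux

variable {G A H : Type*} [Group G] [Group H] [MulAction H A]

open Classical in
/-- The homomorphism sending `F : A → Set A → G` to the permutation
`(a', g', X) ↦ (a', F a' X * g', X)`. -/
noncomputable def phiAux : (A → Set A → G) →* Equiv.Perm (A × G × Set A) where
  toFun F :=
    { toFun := fun x => (x.1, F x.1 x.2.2 * x.2.1, x.2.2)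
      invFun := fun x => (x.1, (F x.1 x.2.2)⁻¹ * x.2.1, x.2.2)
      left_inv := by intro x; simp [mul_assoc]
      right_inv := by intro x; simp [mul_assoc] }
  map_one' := by ext x <;> simp
  map_mul' := by intro F F'; ext x <;> simp [mul_assoc]

lemma phiAux_apply (F : A → Set A → G) (x : A × G × Set A) :
    phiAux F x = (x.1, F x.1 x.2.2 * x.2.1, x.2.2) := rfl

open Classical in
lemma pMap_eq_phiAux (g : G) (c : A) :
    pMap g c = phiAux (fun a' X => if a' = c ∧ c ∈ X then g else 1) := by
  apply Equiv.ext
  intro x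
  by_cases h : x.1 = c ∧ c ∈ x.2.2 <;>
    simp [pMap, phiAux_apply, h]

open Classical in
lemma rMap_eq_phiAux (g : G) (a : A) :
    rMap g a = phiAux (fun a' X => if X ≠ ∅ ∧ a' = a then g else 1) := by
  apply Equiv.ext
  intro x
  by_cases h : x.2.2 ≠ ∅ ∧ x.1 = a <;>
    simp [rMap, phiAux_apply, h]

lemma qMap_conj (π : H) (F : A → Set A → G) :
    qMap π * phiAux F * (qMap (G := G) π)⁻¹ = phiAux (fun a' X => F (π⁻¹ • a') X) := by
  apply Equiv.ext
  intro x
  show qMap π (phiAux F ((qMap π).symm x)) = _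
  simp [qMap, phiAux_apply, Equiv.symm]

open Classical in
lemma sum_exp_helper {A : Type*} (Xf : Finset A) :
    ∑ S ∈ Xf.powerset.erase ∅, (-1 : ℤ) ^ (S.card + 1) = if Xf = ∅ then 0 else 1 := by
  rw [Finset.sum_erase_eq_sub (Finset.empty_mem_powerset Xf)]
  have h1 : ∑ S ∈ Xf.powerset, (-1 : ℤ) ^ (S.card + 1)
      = (∑ S ∈ Xf.powerset, (-1 : ℤ) ^ S.card) * (-1) := by
    rw [Finset.sum_mul]
    exact Finset.sum_congr rfl fun S _ => by rw [pow_succ]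
  rw [h1, Finset.sum_powerset_neg_one_pow_card]
  by_cases h : Xf = ∅ <;> simp [h]

end Aux

/-- Let `G` be a perfect group, `A` a finite set with `|A| ≥ 3`, and `H`
a group acting transitively on `A`. Then for every `g ∈ G` and `a ∈ A`, the permutation
`r_{g,a}` of `A × G × 𝒫(A)` lies in the subgroup generated by all the `p_{g',a'}` and
all the `q_π`. -/
theorem stmt3 {G A H : Type*} [Group G] [Group H] [MulAction H A] [Fintype A]
    (hG : commutator G = ⊤) (hA : 3 ≤ Fintype.card A)
    (htrans : ∀ a b : A, ∃ π : H, π • a = b)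
    (g : G) (a : A) :
    rMap g a ∈ Subgroup.closure
      (Set.range (fun p : G × A => pMap p.1 p.2) ∪
       Set.range (fun π : H => qMap (G := G) (A := A) π)) := by
  classical
  set Gens : Set (Equiv.Perm (A × G × Set A)) :=
    (Set.range (fun p : G × A => pMap p.1 p.2) ∪
     Set.range (fun π : H => qMap (G := G) (A := A) π)) with hGens
  set K := Subgroup.closure Gens with hK
  show rMap g a ∈ K
  rw [rMap_eq_phiAux]
  have hq : ∀ π : H, qMap (G := G) (A := A) π ∈ K := fun π =>
    Subgroup.subset_closure (Or.inr ⟨π, rfl⟩)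
  have hp : ∀ (h : G) (c : A),
      phiAux (fun a' X => if a' = c ∧ c ∈ X then h else 1) ∈ K := by
    intro h c
    rw [← pMap_eq_phiAux]
    exact Subgroup.subset_closure (Or.inl ⟨(h, c), rfl⟩)
  have hconj : ∀ F : A → Set A → G, phiAux F ∈ K → ∀ π : H,
      phiAux (fun a' X => F (π⁻¹ • a') X) ∈ K := by
    intro F hF π
    rw [← qMap_conj]
    exact K.mul_mem (K.mul_mem (hq π) hF) (K.inv_mem (hq π))
  -- single-point conditions at the fiber over `a`
  have hsingle : ∀ (h : G) (c : A),
      phiAux (fun a' X => if a' = a ∧ c ∈ X then h else 1) ∈ K := by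
    intro h c
    obtain ⟨π, hπ⟩ := htrans c a
    have h2 := hconj _ (hp h c) π
    simp only [inv_smul_eq_iff, hπ] at h2
    exact h2
  -- multi-point conditions at the fiber over `a`
  have hmulti : ∀ (S : Finset A), S.Nonempty → ∀ h : G,
      phiAux (fun a' X => if a' = a ∧ (S : Set A) ⊆ X then h else 1) ∈ K := by
    intro S hS
    induction hS using Finset.Nonempty.cons_induction with
    | singleton c =>
        intro h
        have h2 := hsingle h c
        simpa using h2
    | cons c S' hc hS' ih =>
        have condHom : ∀ P : A → Set A → Prop,
            ∃ f : G →* (A → Set A → G),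
              ∀ h, f h = fun a' X => if P a' X then h else 1 := by
          intro P
          refine ⟨{ toFun := fun h a' X => if P a' X then h else 1
                    map_one' := by funext a' X; simp
                    map_mul' := by
                      intro h1 h2
                      funext a' X
                      by_cases hP : P a' X <;> simp [hP] }, fun h => rfl⟩
        obtain ⟨f, hf⟩ := condHom
          (fun a' X => a' = a ∧ ((Finset.cons c S' hc : Finset A) : Set A) ⊆ X)
        have key : ∀ h : G, h ∈ (Subgroup.comap (phiAux.comp f) K) →
            phiAux (fun a' X =>
              if a' = a ∧ ((Finset.cons c S' hc : Finset A) : Set A) ⊆ X then h else 1) ∈ K := by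
          intro h hh
          have hh2 : phiAux (f h) ∈ K := hh
          rw [hf] at hh2
          convert hh2 using 2
          funext a' X
          congr
        intro h
        apply key
        open scoped commutatorElement in
        have htop : (⊤ : Subgroup G) ≤ Subgroup.comap (phiAux.comp f) K := by
          rw [← hG, commutator_eq_closure, Subgroup.closure_le]
          rintro z ⟨x, y, rfl⟩
          show phiAux (f ⁅x, y⁆) ∈ K
          have hcomm : f ⁅x, y⁆ =
              ⁅(fun (a' : A) (X : Set A) => if a' = a ∧ (S' : Set A) ⊆ X then x else 1),
               (fun (a' : A) (X : Set A) => if a' = a ∧ c ∈ X then y else 1)⁆ := by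
            rw [hf]
            funext a' X
            simp only [commutatorElement_def, Pi.mul_apply, Pi.inv_apply]
            by_cases h1 : a' = a
            · by_cases h2 : (S' : Set A) ⊆ X <;> by_cases h3 : c ∈ X <;>
                simp [h1, h2, h3, Finset.coe_cons, Set.insert_subset_iff]
            · simp [h1]
          rw [hcomm, commutatorElement_def, map_mul, map_mul, map_mul, map_inv, map_inv]
          have hu := ih x
          have hv := hsingle y c
          exact K.mul_mem (K.mul_mem (K.mul_mem hu hv) (K.inv_mem hu)) (K.inv_mem hv)
        exact htop (Subgroup.mem_top h)
  -- inclusion–exclusion: accumulate conditional multiplications over a list of subsets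
  have hacc : ∀ L : Finset (Finset A), (∀ S ∈ L, S.Nonempty) →
      phiAux (fun a' X => if a' = a
        then g ^ (∑ S ∈ L.filter (fun S : Finset A => (S : Set A) ⊆ X),
          (-1 : ℤ) ^ (S.card + 1))
        else 1) ∈ K := by
    intro L
    induction L using Finset.cons_induction with
    | empty =>
        intro _
        have h0 : (fun (a' : A) (X : Set A) => if a' = a
            then g ^ (∑ S ∈ Finset.filter (fun S : Finset A => (S : Set A) ⊆ X) ∅,
              (-1 : ℤ) ^ (S.card + 1))
            else 1) = (1 : A → Set A → G) := by
          funext a' X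
          simp
        rw [h0, map_one]
        exact K.one_mem
    | cons S₀ L' hS₀ ih =>
        intro hL
        have hmem := hmulti S₀ (hL S₀ (Finset.mem_cons_self S₀ L'))
          (g ^ ((-1 : ℤ) ^ (S₀.card + 1)))
        have ih' := ih (fun S hS => hL S (Finset.mem_cons_of_mem hS))
        have hsplit : (fun (a' : A) (X : Set A) => if a' = a
            then g ^ (∑ S ∈ (Finset.cons S₀ L' hS₀).filter
                (fun S : Finset A => (S : Set A) ⊆ X),
              (-1 : ℤ) ^ (S.card + 1)) else 1)
          = (fun (a' : A) (X : Set A) =>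
              if a' = a ∧ (S₀ : Set A) ⊆ X then g ^ ((-1 : ℤ) ^ (S₀.card + 1)) else 1) *
            (fun (a' : A) (X : Set A) => if a' = a
              then g ^ (∑ S ∈ L'.filter (fun S : Finset A => (S : Set A) ⊆ X),
                (-1 : ℤ) ^ (S.card + 1))
              else 1) := by
          funext a' X
          simp only [Pi.mul_apply]
          by_cases h1 : a' = a
          · by_cases h2 : (S₀ : Set A) ⊆ X
            · rw [if_pos h1, if_pos ⟨h1, h2⟩, if_pos h1, Finset.filter_cons, if_pos h2,
                Finset.sum_cons, zpow_add]
            · rw [if_pos h1, if_neg (fun hcc => h2 hcc.2), one_mul, if_pos h1,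
                Finset.filter_cons, if_neg h2]
          · rw [if_neg h1, if_neg (fun hcc => h1 hcc.1), if_neg h1, one_mul]
        rw [hsplit, map_mul]
        exact K.mul_mem hmem ih'
  -- conclusion
  have hfinal := hacc (Finset.univ.powerset.filter (fun S : Finset A => S.Nonempty))
    (fun S hS => (Finset.mem_filter.mp hS).2)
  have heq : (fun (a' : A) (X : Set A) => if a' = a
      then g ^ (∑ S ∈ (Finset.univ.powerset.filter (fun S : Finset A => S.Nonempty)).filter
          (fun S : Finset A => (S : Set A) ⊆ X), (-1 : ℤ) ^ (S.card + 1))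
      else 1)
    = (fun (a' : A) (X : Set A) => if X ≠ ∅ ∧ a' = a then g else 1) := by
    funext a' X
    by_cases h1 : a' = a
    · set Xf : Finset A := Finset.univ.filter (fun x => x ∈ X) with hXf
      have hset : (Finset.univ.powerset.filter (fun S : Finset A => S.Nonempty)).filter
          (fun S : Finset A => (S : Set A) ⊆ X) = Xf.powerset.erase ∅ := by
        ext S
        simp only [Finset.mem_filter, Finset.mem_powerset, Finset.mem_erase,
          Finset.subset_univ, true_and, Finset.nonempty_iff_ne_empty, hXf]
        constructor
        · rintro ⟨hne, hsub⟩
          exact ⟨hne, fun x hx => Finset.mem_filter.mpr ⟨Finset.mem_univ x, hsub hx⟩⟩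
        · rintro ⟨hne, hsub⟩
          exact ⟨hne, fun x hx => (Finset.mem_filter.mp (hsub hx)).2⟩
      have hXfe : (Xf = ∅) ↔ (X = ∅) := by
        simp [hXf, Finset.filter_eq_empty_iff, Set.eq_empty_iff_forall_notMem]
      rw [hset, sum_exp_helper]
      by_cases h2 : X = ∅
      · simp [h1, h2, hXfe.mpr h2]
      · have h3 : Xf ≠ ∅ := fun hc => h2 (hXfe.mp hc)
        simp [h1, h2, h3]
    · simp [h1]
  rw [heq] at hfinal
  exact hfinal
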